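/- For n ≥ 3, the discriminant of the trinomial A_1 + A_{n-1} T^{n-2} + A_n T^{n-1} with respect to T equals, up to sign, A_1^{n-3} ((n-1)^{n-1} A_1 A_n^{n-2} ± (n-2)^{n-2} A_{n-1}^{n-1}). -/

import Mathlib

set_option maxHeartbeats 1000000


open Polynomial

/-- The Sylvester matrix of two polynomials `f`, `g` (with respect to their
natural degrees): the first `g.natDegree` rows carry the coefficients of `f`,
the remaining `f.natDegree` rows carry the coefficients of `g`. -/
noncomputable def sylvester {R : Type*} [CommRing R] (f g : R[X]) :
    Matrix (Fin (f.natDegree + g.natDegree)) (Fin (f.natDegree + g.natDegree)) R :=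
  Matrix.of fun i j =>
    if (i : ℕ) < g.natDegree then
      (if (i : ℕ) ≤ (j : ℕ) ∧ (j : ℕ) ≤ (i : ℕ) + f.natDegree then
        f.coeff (f.natDegree + (i : ℕ) - (j : ℕ)) else 0)
    else
      (if (i : ℕ) - g.natDegree ≤ (j : ℕ) ∧ (j : ℕ) ≤ ((i : ℕ) - g.natDegree) + g.natDegree then
        g.coeff (g.natDegree + ((i : ℕ) - g.natDegree) - (j : ℕ)) else 0)

/-- The resultant `Res_T(f, g)`, the determinant of the Sylvester matrix. -/
noncomputable def resultant {R : Type*} [CommRing R] (f g : R[X]) : R :=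
  (_root_.sylvester f g).det

/-- `IsDiscOf f D` says `D` is the discriminant of `f`, characterized (without
division) by `lc(f) · D = (-1)^(n(n-1)/2) · Res_T(f, f')` where `n = deg f`.
Over an integral domain with `lc(f) ≠ 0` this determines `D` uniquely. -/
def IsDiscOf {R : Type*} [CommRing R] (f : R[X]) (D : R) : Prop :=
  f.leadingCoeff * D =
    (-1) ^ (f.natDegree * (f.natDegree - 1) / 2) * _root_.resultant f (derivative f)

/-- The discriminant of a polynomial over a field:
`Disc_T(f) = (-1)^(n(n-1)/2) · Res_T(f, f') / lc(f)`. -/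
noncomputable def disc {F : Type*} [Field F] (f : F[X]) : F :=
  ((-1) ^ (f.natDegree * (f.natDegree - 1) / 2) * _root_.resultant f (derivative f)) / f.leadingCoeff

/-! ### Auxiliary material for `disc_trinomial` -/

/-- The bordered bidiagonal matrix appearing as a block of the Sylvester
matrix of a trinomial. -/
noncomputable def triM {R : Type*} [CommRing R] (k : ℕ) (a b c p q : R) :
    Matrix (Fin (k+3)) (Fin (k+3)) R :=
  Matrix.of fun i j =>
    if (i : ℕ) = 0 then
      (if (j : ℕ) = 0 then c else if (j : ℕ) = 1 then b else if (j : ℕ) = k+2 then a else 0)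
    else
      (if (j : ℕ) + 1 = (i : ℕ) then p else if (j : ℕ) = (i : ℕ) then q else 0)

theorem det_triM {R : Type*} [CommRing R] (k : ℕ) (a b c p q : R) :
    (triM k a b c p q).det =
      c * q ^ (k+2) - b * p * q ^ (k+1) + (-1) ^ k * a * p ^ (k+2) := by

  have hdet := Matrix.det_succ_row_zero (triM k a b c p q)
  rw [hdet]
  have hz : ∀ j ∈ (Finset.univ : Finset (Fin (k+3))),
      j ∉ ({0, 1, Fin.last (k+2)} : Finset (Fin (k+3))) →
      ((-1 : R) ^ (j : ℕ) * triM k a b c p q 0 j *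
        ((triM k a b c p q).submatrix Fin.succ j.succAbove).det) = 0 := by
    intro j _ hj
    simp only [Finset.mem_insert, Finset.mem_singleton] at hj
    push_neg at hj
    obtain ⟨h0, h1, h2⟩ := hj
    have hv0 : (j : ℕ) ≠ 0 := fun h => h0 (Fin.ext h)
    have hv1 : (j : ℕ) ≠ 1 := fun h => h1 (Fin.ext h)
    have hv2 : (j : ℕ) ≠ k + 2 := fun h => h2 (Fin.ext h)
    simp [triM, hv0, hv1, hv2, h0]
  rw [← Finset.sum_subset (Finset.subset_univ ({0, 1, Fin.last (k+2)} : Finset (Fin (k+3)))) hz]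
  have h01 : (0 : Fin (k+3)) ≠ 1 := by simp [Fin.ext_iff]
  have h0l : (0 : Fin (k+3)) ≠ Fin.last (k+2) := by simp [Fin.ext_iff]
  have h1l : (1 : Fin (k+3)) ≠ Fin.last (k+2) := by simp [Fin.ext_iff]
  rw [Finset.sum_insert (by simp [h01, h0l]), Finset.sum_insert (by simp [h1l]),
    Finset.sum_singleton]
  have hsa0 : (Fin.succAbove (0 : Fin (k+3))) = Fin.succ := Fin.succAbove_zero
  have hsal : (Fin.succAbove (Fin.last (k+2))) = Fin.castSucc := Fin.succAbove_last
  have hsa1 : ∀ j : Fin (k+2), ((Fin.succAbove (1 : Fin (k+3))) j : ℕ) =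
      if (j : ℕ) < 1 then (j : ℕ) else (j : ℕ) + 1 := by
    intro j
    rw [Fin.succAbove]
    split_ifs with h1 h2 h3 <;>
      simp_all [Fin.lt_def] <;> omega
  have hm0 : ((triM k a b c p q).submatrix Fin.succ (Fin.succAbove 0)).det = q ^ (k+2) := by
    rw [hsa0, Matrix.det_of_lowerTriangular]
    · have hdiag : ∀ i : Fin (k+2),
          ((triM k a b c p q).submatrix Fin.succ Fin.succ) i i = q := by
        intro i
        simp only [Matrix.submatrix_apply, triM, Matrix.of_apply, Fin.val_succ]
        split_ifs <;> first | rfl | omega | exact (show False by assumption).elim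
      simp only [hdiag, Finset.prod_const, Finset.card_univ, Fintype.card_fin]
    · intro i j hij
      simp only [OrderDual.toDual_lt_toDual] at hij
      rw [Fin.lt_def] at hij
      simp only [Matrix.submatrix_apply, triM, Matrix.of_apply, Fin.val_succ]
      split_ifs <;> first | rfl | omega | exact (show False by assumption).elim
  have hm1 : ((triM k a b c p q).submatrix Fin.succ (Fin.succAbove 1)).det = p * q ^ (k+1) := by
    rw [Matrix.det_of_lowerTriangular]
    · have hdiag : ∀ i : Fin (k+2),
          ((triM k a b c p q).submatrix Fin.succ (Fin.succAbove 1)) i i =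
            if (i : ℕ) = 0 then p else q := by
        intro i
        simp only [Matrix.submatrix_apply, triM, Matrix.of_apply, Fin.val_succ, hsa1]
        split_ifs <;> first | rfl | omega | exact (show False by assumption).elim
      rw [Finset.prod_congr rfl (fun i _ => hdiag i), Fin.prod_univ_succ]
      simp [Finset.prod_const]
    · intro i j hij
      simp only [OrderDual.toDual_lt_toDual] at hij
      rw [Fin.lt_def] at hij
      simp only [Matrix.submatrix_apply, triM, Matrix.of_apply, Fin.val_succ, hsa1]
      split_ifs <;> first | rfl | omega | exact (show False by assumption).elim
  have hml : ((triM k a b c p q).submatrix Fin.succ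
      (Fin.succAbove (Fin.last (k+2)))).det = p ^ (k+2) := by
    rw [hsal, Matrix.det_of_upperTriangular]
    · have hdiag : ∀ i : Fin (k+2),
          ((triM k a b c p q).submatrix Fin.succ Fin.castSucc) i i = p := by
        intro i
        simp only [Matrix.submatrix_apply, triM, Matrix.of_apply, Fin.val_succ, Fin.coe_castSucc]
        split_ifs <;> first | rfl | omega | exact (show False by assumption).elim
      simp only [hdiag, Finset.prod_const, Finset.card_univ, Fintype.card_fin]
    · intro i j hij
      simp only [id] at hij
      rw [Fin.lt_def] at hij
      simp only [Matrix.submatrix_apply, triM, Matrix.of_apply, Fin.val_succ, Fin.coe_castSucc]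
      split_ifs <;> first | rfl | omega | exact (show False by assumption).elim
  rw [hm0, hm1, hml]
  have e00 : triM k a b c p q 0 0 = c := by simp [triM]
  have e01 : triM k a b c p q 0 1 = b := by
    simp only [triM, Matrix.of_apply, Fin.val_zero, Fin.val_one]
    norm_num
  have e0l : triM k a b c p q 0 (Fin.last (k+2)) = a := by
    simp only [triM, Matrix.of_apply, Fin.val_zero, Fin.val_last]
    split_ifs <;> first | rfl | omega | exact (show False by assumption).elim
  rw [e00, e01, e0l]
  simp only [Fin.val_zero, Fin.val_one, Fin.val_last, pow_zero, pow_one]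
  ring

/-- Row relabeling for the Sylvester matrix of the trinomial. -/
def trinRho (k : ℕ) : Fin k ⊕ Fin (k+3) → Fin (k+(k+3)) :=
  Sum.elim (fun i => ⟨(i : ℕ) + 1, by omega⟩)
    (fun j => if (j : ℕ) = 0 then ⟨0, by omega⟩ else ⟨k + (j : ℕ), by omega⟩)

/-- Column relabeling for the Sylvester matrix of the trinomial. -/
def trinGam (k : ℕ) : Fin k ⊕ Fin (k+3) → Fin (k+(k+3)) :=
  Sum.elim (fun i => ⟨k + 3 + (i : ℕ), by omega⟩) (fun j => ⟨(j : ℕ), by omega⟩)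

theorem trinRho_bij (k : ℕ) : Function.Bijective (trinRho k) := by

  rw [Fintype.bijective_iff_injective_and_card]
  refine ⟨?_, by simp⟩
  rintro (i | i) (j | j) h <;>
    simp only [trinRho, Sum.elim_inl, Sum.elim_inr] at h
  · simp only [Fin.mk.injEq] at h
    exact congrArg Sum.inl (Fin.ext (by omega))
  · split_ifs at h <;> simp only [Fin.mk.injEq] at h <;> omega
  · split_ifs at h <;> simp only [Fin.mk.injEq] at h <;> omega
  · split_ifs at h with h1 h2 <;> simp only [Fin.mk.injEq] at h <;>
      exact congrArg Sum.inr (Fin.ext (by omega))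

theorem trinGam_bij (k : ℕ) : Function.Bijective (trinGam k) := by

  rw [Fintype.bijective_iff_injective_and_card]
  refine ⟨?_, by simp⟩
  rintro (i | i) (j | j) h <;>
    simp only [trinGam, Sum.elim_inl, Sum.elim_inr, Fin.mk.injEq] at h
  · exact congrArg Sum.inl (Fin.ext (by omega))
  · exact absurd h (by omega)
  · exact absurd h (by omega)
  · exact congrArg Sum.inr (Fin.ext (by omega))

section Poly
variable {k : ℕ} {σ : Type*} (a b c p q : MvPolynomial σ ℤ)

theorem trin_coeff (e : ℕ) :
    (Polynomial.C a + Polynomial.C b * X ^ (k+1) + Polynomial.C c * X ^ (k+2)).coeff e =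
      if e = 0 then a else if e = k+1 then b else if e = k+2 then c else 0 := by
  simp only [coeff_add, coeff_C, coeff_C_mul, coeff_X_pow, mul_ite, mul_one, mul_zero]
  split_ifs <;> (try (exfalso; omega)) <;> ring

theorem trin_natDegree (hc : c ≠ 0) :
    (Polynomial.C a + Polynomial.C b * X ^ (k+1) + Polynomial.C c * X ^ (k+2)).natDegree
      = k + 2 := by
  rw [natDegree_add_eq_right_of_natDegree_lt, natDegree_C_mul_X_pow _ _ hc]
  rw [natDegree_C_mul_X_pow _ _ hc]
  calc (Polynomial.C a + Polynomial.C b * X ^ (k+1)).natDegree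
      ≤ max (Polynomial.C a).natDegree (Polynomial.C b * X ^ (k+1)).natDegree :=
        natDegree_add_le _ _
    _ ≤ k + 1 := by
        simp only [natDegree_C, max_le_iff]
        exact ⟨Nat.zero_le _, natDegree_C_mul_le b _ |>.trans (by simp)⟩
    _ < k + 2 := by omega

theorem trin_deriv :
    derivative (Polynomial.C a + Polynomial.C b * X ^ (k+1) + Polynomial.C c * X ^ (k+2)) =
      Polynomial.C (b * (k+1 : ℕ)) * X ^ k + Polynomial.C (c * (k+2 : ℕ)) * X ^ (k+1) := by
  simp only [derivative_add, derivative_C, derivative_C_mul_X_pow, zero_add]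
  norm_num

theorem bin_coeff (e : ℕ) :
    (Polynomial.C q * X ^ k + Polynomial.C p * X ^ (k+1)).coeff e =
      if e = k then q else if e = k+1 then p else 0 := by
  simp only [coeff_add, coeff_C_mul, coeff_X_pow, mul_ite, mul_one, mul_zero]
  split_ifs <;> (try (exfalso; omega)) <;> ring

theorem bin_natDegree (hp : p ≠ 0) :
    (Polynomial.C q * X ^ k + Polynomial.C p * X ^ (k+1)).natDegree = k + 1 := by
  rw [natDegree_add_eq_right_of_natDegree_lt, natDegree_C_mul_X_pow _ _ hp]
  rw [natDegree_C_mul_X_pow _ _ hp]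
  calc (Polynomial.C q * X ^ k).natDegree ≤ k := natDegree_C_mul_le q _ |>.trans (by simp)
    _ < k + 1 := by omega

end Poly

open MvPolynomial in
/-- For `n ≥ 3` the discriminant of the trinomial
`A_1 + A_{n-1} T^(n-2) + A_n T^(n-1)` equals, up to sign,
`A_1^(n-3) · ((n-1)^(n-1) A_1 A_n^(n-2) ± (n-2)^(n-2) A_{n-1}^(n-1))`. -/
theorem disc_trinomial {n : ℕ} (hn : 3 ≤ n)
    (D : MvPolynomial (Fin (n + 1)) ℤ)
    (hD : IsDiscOf (Polynomial.C (X 1) +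
        Polynomial.C (X ⟨n - 1, by omega⟩) * Polynomial.X ^ (n - 2) +
        Polynomial.C (X ⟨n, by omega⟩) * Polynomial.X ^ (n - 1)) D) :
    ∃ ε δ : ℤ, (ε = 1 ∨ ε = -1) ∧ (δ = 1 ∨ δ = -1) ∧
      D = MvPolynomial.C ε * (X 1) ^ (n - 3) *
        (MvPolynomial.C (((n : ℤ) - 1) ^ (n - 1)) * X 1 * (X ⟨n, by omega⟩) ^ (n - 2) +
         MvPolynomial.C (δ * ((n : ℤ) - 2) ^ (n - 2)) * (X ⟨n - 1, by omega⟩) ^ (n - 1)) := by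
  obtain ⟨k, rfl⟩ : ∃ k, n = k + 3 := ⟨n - 3, by omega⟩
  set a : MvPolynomial (Fin (k + 3 + 1)) ℤ := MvPolynomial.X 1 with ha_def
  set b : MvPolynomial (Fin (k + 3 + 1)) ℤ := MvPolynomial.X ⟨k + 2, by omega⟩ with hb_def
  set c : MvPolynomial (Fin (k + 3 + 1)) ℤ := MvPolynomial.X ⟨k + 3, by omega⟩ with hc_def
  have ha : a ≠ 0 := MvPolynomial.X_ne_zero _
  have hb : b ≠ 0 := MvPolynomial.X_ne_zero _
  have hc : c ≠ 0 := MvPolynomial.X_ne_zero _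
  have hD' : IsDiscOf (Polynomial.C a + Polynomial.C b * Polynomial.X ^ (k+1) +
      Polynomial.C c * Polynomial.X ^ (k+2)) D := hD
  clear hD
  set f : (MvPolynomial (Fin (k + 3 + 1)) ℤ)[X] := Polynomial.C a + Polynomial.C b * Polynomial.X ^ (k+1) + Polynomial.C c * Polynomial.X ^ (k+2)
    with hf_def
  set p : MvPolynomial (Fin (k + 3 + 1)) ℤ := c * ((k+2 : ℕ) : MvPolynomial (Fin (k + 3 + 1)) ℤ) with hp_def
  set q : MvPolynomial (Fin (k + 3 + 1)) ℤ := b * ((k+1 : ℕ) : MvPolynomial (Fin (k + 3 + 1)) ℤ) with hq_def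
  have hp : p ≠ 0 := mul_ne_zero hc (Nat.cast_ne_zero.mpr (by omega))
  have hfd : f.natDegree = k + 2 := trin_natDegree a b c hc
  have hgder : derivative f = Polynomial.C q * Polynomial.X ^ k + Polynomial.C p * Polynomial.X ^ (k+1) :=
    trin_deriv a b c
  have hgd : (derivative f).natDegree = k + 1 := by rw [hgder]; exact bin_natDegree p q hp
  have hlc : f.leadingCoeff = c := by
    rw [Polynomial.leadingCoeff, hfd, hf_def, trin_coeff]
    norm_num
  -- the recast Sylvester matrix
  have hK : f.natDegree + (derivative f).natDegree = k + (k+3) := by rw [hfd, hgd]; omega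
  set S : Matrix (Fin (k+(k+3))) (Fin (k+(k+3))) (MvPolynomial (Fin (k + 3 + 1)) ℤ) :=
    (_root_.sylvester f (derivative f)).submatrix (finCongr hK.symm) (finCongr hK.symm) with hS_def
  have hres : _root_.resultant f (derivative f) = S.det :=
    (Matrix.det_submatrix_equiv_self (finCongr hK.symm) _).symm
  have hSent : ∀ i j : Fin (k+(k+3)), S i j =
      if (i : ℕ) < k+1 then
        (if (i : ℕ) ≤ (j : ℕ) ∧ (j : ℕ) ≤ (i : ℕ) + (k+2) then
          (if (k+2) + (i : ℕ) - (j : ℕ) = 0 then a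
           else if (k+2) + (i : ℕ) - (j : ℕ) = k+1 then b
           else if (k+2) + (i : ℕ) - (j : ℕ) = k+2 then c else 0)
         else 0)
      else
        (if (i : ℕ) - (k+1) ≤ (j : ℕ) ∧ (j : ℕ) ≤ ((i : ℕ) - (k+1)) + (k+1) then
          (if (k+1) + ((i : ℕ) - (k+1)) - (j : ℕ) = k then q
           else if (k+1) + ((i : ℕ) - (k+1)) - (j : ℕ) = k+1 then p else 0)
         else 0) := by
    intro i j
    have hgd2 : (Polynomial.C q * Polynomial.X ^ k + Polynomial.C p * Polynomial.X ^ (k+1)).natDegree = k+1 :=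
      bin_natDegree p q hp
    rw [hS_def]
    simp only [Matrix.submatrix_apply, _root_.sylvester, Matrix.of_apply, finCongr_apply,
      Fin.coe_cast, hgder, hgd2, hfd]
    simp only [hf_def, trin_coeff, bin_coeff]
  -- block decomposition
  set e1 : (Fin k ⊕ Fin (k+3)) ≃ Fin (k+(k+3)) :=
    Equiv.ofBijective (trinRho k) (trinRho_bij k) with he1_def
  set e2 : (Fin k ⊕ Fin (k+3)) ≃ Fin (k+(k+3)) :=
    Equiv.ofBijective (trinGam k) (trinGam_bij k) with he2_def
  set σp : Equiv.Perm (Fin k ⊕ Fin (k+3)) := e2.trans e1.symm with hσp_def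
  have hperm : S.submatrix e1 e2 = (S.submatrix e1 e1).submatrix id σp := by
    ext i j
    simp [hσp_def, Matrix.submatrix_apply]
  set s : ℤ := (Equiv.Perm.sign σp : ℤ) with hs_def
  have hs : s = 1 ∨ s = -1 := Int.isUnit_iff.mp (Equiv.Perm.sign σp).isUnit
  have hdetperm : (S.submatrix e1 e2).det = ((s : ℤ) : MvPolynomial (Fin (k + 3 + 1)) ℤ) * S.det := by
    rw [hperm, Matrix.det_permute', Matrix.det_submatrix_equiv_self]
  have hv1 : ∀ i : Fin k, ((e1 (Sum.inl i)) : ℕ) = (i : ℕ) + 1 := fun i => rfl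
  have hv2 : ∀ j : Fin (k+3),
      ((e1 (Sum.inr j)) : ℕ) = if (j : ℕ) = 0 then 0 else k + (j : ℕ) := by
    intro j
    show ((trinRho k (Sum.inr j)) : ℕ) = _
    simp only [trinRho, Sum.elim_inr, apply_ite (Fin.val)]
  have hw1 : ∀ i : Fin k, ((e2 (Sum.inl i)) : ℕ) = k + 3 + (i : ℕ) := fun i => rfl
  have hw2 : ∀ j : Fin (k+3), ((e2 (Sum.inr j)) : ℕ) = (j : ℕ) := fun j => rfl
  have h11 : (S.submatrix e1 e2).toBlocks₁₁ = a • (1 : Matrix (Fin k) (Fin k) (MvPolynomial (Fin (k + 3 + 1)) ℤ)) := by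
    ext i j
    simp only [Matrix.toBlocks₁₁, Matrix.submatrix_apply, Matrix.of_apply, hSent,
      hv1, hw1, Matrix.smul_apply, Matrix.one_apply, Fin.ext_iff, smul_eq_mul,
      mul_ite, mul_one, mul_zero]
    split_ifs <;> (try rfl) <;> omega
  have h21 : (S.submatrix e1 e2).toBlocks₂₁ = 0 := by
    ext i j
    simp only [Matrix.toBlocks₂₁, Matrix.submatrix_apply, Matrix.of_apply, hSent,
      hv2, hw1, Matrix.zero_apply]
    split_ifs <;> (try rfl) <;> omega
  have h22 : (S.submatrix e1 e2).toBlocks₂₂ = triM k a b c p q := by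
    ext i j
    simp only [Matrix.toBlocks₂₂, Matrix.submatrix_apply, Matrix.of_apply, hSent,
      hv2, hw2, triM]
    split_ifs <;> (try rfl) <;> omega
  have hblock : S.submatrix e1 e2 =
      Matrix.fromBlocks (a • (1 : Matrix (Fin k) (Fin k) (MvPolynomial (Fin (k + 3 + 1)) ℤ)))
        ((S.submatrix e1 e2).toBlocks₁₂) 0 (triM k a b c p q) := by
    rw [← h11, ← h21, ← h22, Matrix.fromBlocks_toBlocks]
  have hdet2 : (S.submatrix e1 e2).det = a ^ k * (triM k a b c p q).det := by
    rw [hblock, Matrix.det_fromBlocks_zero₂₁, Matrix.det_smul, Matrix.det_one]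
    simp [Fintype.card_fin]
  have hss : ((s : ℤ) : MvPolynomial (Fin (k + 3 + 1)) ℤ) * ((s : ℤ) : MvPolynomial (Fin (k + 3 + 1)) ℤ) = 1 := by rcases hs with h | h <;> rw [h] <;> norm_num
  have hSdet : S.det = ((s : ℤ) : MvPolynomial (Fin (k + 3 + 1)) ℤ) * (a ^ k * (triM k a b c p q).det) := by
    rw [← hdet2, hdetperm, ← mul_assoc, hss, one_mul]
  -- the sign from the discriminant definition
  set E : ℕ := f.natDegree * (f.natDegree - 1) / 2 with hE_def
  set ε₁ : ℤ := (-1) ^ E with hε₁_def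
  have hε₁ : ε₁ = 1 ∨ ε₁ = -1 := by
    rcases Nat.even_or_odd E with h | h
    · exact Or.inl (Even.neg_one_pow h)
    · exact Or.inr (Odd.neg_one_pow h)
  have hsign : ((-1 : MvPolynomial (Fin (k + 3 + 1)) ℤ)) ^ E = ((ε₁ : ℤ) : MvPolynomial (Fin (k + 3 + 1)) ℤ) := by rw [hε₁_def]; push_cast; ring
  -- main identity
  have key : c * D = ((ε₁ : ℤ) : MvPolynomial (Fin (k + 3 + 1)) ℤ) * (((s : ℤ) : MvPolynomial (Fin (k + 3 + 1)) ℤ) *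
      (a ^ k * (c * q ^ (k+2) - b * p * q ^ (k+1) + (-1) ^ k * a * p ^ (k+2)))) := by
    have := hD'
    rw [IsDiscOf] at this
    rw [hlc] at this
    rw [this, ← hE_def, hsign, hres, hSdet, det_triM]
  have hkk : ∃ μ : ℤ, (μ = 1 ∨ μ = -1) ∧ ((-1 : MvPolynomial (Fin (k + 3 + 1)) ℤ)) ^ k = ((μ : ℤ) : MvPolynomial (Fin (k + 3 + 1)) ℤ) ∧
      ((-1 : ℤ)) ^ k = μ := by
    exact ⟨(-1) ^ k, by
      rcases Nat.even_or_odd k with h | h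
      · exact Or.inl (Even.neg_one_pow h)
      · exact Or.inr (Odd.neg_one_pow h), by push_cast; ring, rfl⟩
  obtain ⟨μ, hμ, hμR, hμZ⟩ := hkk
  refine ⟨ε₁ * s * μ, -μ, ?_, ?_, ?_⟩
  · rcases hε₁ with h1 | h1 <;> rcases hs with h2 | h2 <;> rcases hμ with h3 | h3 <;>
      rw [h1, h2, h3] <;> norm_num
  · rcases hμ with h3 | h3 <;> rw [h3] <;> norm_num
  · apply mul_left_cancel₀ hc
    rw [key, hμR, hp_def, hq_def]
    simp only [mul_pow]
    simp only [show k+3-3 = k from rfl, show k+3-2 = k+1 from rfl, show k+3-1 = k+2 from rfl]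
    rw [show (MvPolynomial.X (⟨k + 2, by omega⟩ : Fin (k + 3 + 1)) :
      MvPolynomial (Fin (k + 3 + 1)) ℤ) = b from rfl]
    simp only [eq_intCast]
    rcases hμ with h | h <;> subst h <;> push_cast <;> ring
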